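/- Being isogenous via a separable isogeny is an equivalence relation on pure A-motives over a finite field L. In particular, if f: M' → M is a separable isogeny of pure A-motives over a finite field, then there exists a separable isogeny g: M → M'. -/

import Mathlib

open Polynomial

/-- over a finite field `L`, being isogenous via a separable
isogeny is an equivalence relation on (pure) `A`-motives (`A = F_q[t]`); the
essential content is symmetry: if `f : M' → M` is a separable isogeny (injective
`τ`-compatible with torsion cokernel on which the induced `τ` is an
isomorphism), then there exists a separable isogeny `g : M → M'`. -/
lemma aux_exists_pos_iterate_eq_self {α : Type*} [Finite α] {F : α → α}
    (hF : Function.Injective F) : ∃ m, 0 < m ∧ ∀ x, F^[m] x = x := by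
  obtain ⟨i, j, hij, hFij⟩ := Finite.exists_ne_map_eq_of_infinite (fun n : ℕ => F^[n])
  wlog h : i < j generalizing i j
  · exact this j i hij.symm hFij.symm (by omega)
  refine ⟨j - i, by omega, fun x => ?_⟩
  have hinj : Function.Injective (F^[i]) := hF.iterate i
  apply hinj
  have : F^[i + (j - i)] x = F^[j] x := by congr 1; omega
  rw [Function.iterate_add_apply] at this
  rw [this, ← hFij]

lemma aux_finite_of_torsion {L : Type} [Field L] [Finite L] (N : Type)
    [AddCommGroup N] [Module (Polynomial L) N] [Module.Finite (Polynomial L) N]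
    (c : Polynomial L) (hc : c ≠ 0) (h : ∀ n : N, c • n = 0) : Finite N := by
  obtain ⟨k, φ, hφ⟩ := Module.Finite.exists_fin' (Polynomial L) N
  have : Module.Finite L (AdjoinRoot c) := Module.Finite.of_basis (AdjoinRoot.powerBasis hc).basis
  have : Finite (AdjoinRoot c) := Module.finite_of_finite L
  have hmk : Function.Surjective (AdjoinRoot.mk c) := AdjoinRoot.mk_surjective
  set s : AdjoinRoot c → Polynomial L := Function.surjInv hmk with hs
  have hsec : ∀ z, AdjoinRoot.mk c (s z) = z := fun z => Function.surjInv_eq hmk z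
  refine Finite.of_surjective (fun v : Fin k → AdjoinRoot c => φ (fun i => s (v i))) ?_
  intro n
  obtain ⟨w, rfl⟩ := hφ n
  refine ⟨fun i => AdjoinRoot.mk c (w i), ?_⟩
  have hdvd : ∀ i, c ∣ (s (AdjoinRoot.mk c (w i)) - w i) := by
    intro i
    rw [← AdjoinRoot.mk_eq_zero, map_sub, hsec, sub_self]
  choose t ht using hdvd
  have : (fun i => s (AdjoinRoot.mk c (w i))) = w + c • t := by
    funext i
    simp only [Pi.add_apply, Pi.smul_apply, smul_eq_mul]
    linear_combination ht i
  show φ (fun i => s (AdjoinRoot.mk c (w i))) = φ w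
  rw [this, map_add, map_smul, h (φ t), add_zero]

theorem stmt17 {q : ℕ} (hq : 1 < q) {L : Type} [Field L] [Finite L]
    (frob : L →+* L) (hfrob : ∀ x : L, frob x = x ^ q) (θ : L)
    {M M' : Type} [AddCommGroup M] [Module (Polynomial L) M]
    [AddCommGroup M'] [Module (Polynomial L) M']
    [Module L M] [IsScalarTower L (Polynomial L) M]
    [Module L M'] [IsScalarTower L (Polynomial L) M']
    [Module.Finite (Polynomial L) M] [Module.Projective (Polynomial L) M]
    [Module.Finite (Polynomial L) M'] [Module.Projective (Polynomial L) M']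
    (τ : M → M) (τ' : M' → M')
    (hτadd : ∀ x y, τ (x + y) = τ x + τ y)
    (hτsl : ∀ (p : Polynomial L) (x : M), τ (p • x) = (p.map frob) • τ x)
    (hτinj : Function.Injective τ)
    (hτ'add : ∀ x y, τ' (x + y) = τ' x + τ' y)
    (hτ'sl : ∀ (p : Polynomial L) (y : M'), τ' (p • y) = (p.map frob) • τ' y)
    (hτ'inj : Function.Injective τ')
    -- characteristic and finiteness of the cokernels of `τ`, `τ'`
    [FiniteDimensional L (M ⧸ Submodule.span (Polynomial L) (Set.range τ))]
    [FiniteDimensional L (M' ⧸ Submodule.span (Polynomial L) (Set.range τ'))]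
    (hJ : ∃ dM : ℕ, ∀ y : M, ((X - C θ) ^ dM : Polynomial L) • y ∈
      Submodule.span (Polynomial L) (Set.range τ))
    (hJ' : ∃ dM' : ℕ, ∀ y : M', ((X - C θ) ^ dM' : Polynomial L) • y ∈
      Submodule.span (Polynomial L) (Set.range τ'))
    -- the separable isogeny `f : M' → M`
    (f : M' →ₗ[Polynomial L] M) (hfinj : Function.Injective f)
    (hcompat : ∀ x : M', f (τ' x) = τ (f x))
    (htors : ∃ a : Polynomial L, a ≠ 0 ∧ ∀ y : M, a • y ∈ LinearMap.range f)
    (hsep_inj : ∀ z : M, τ z ∈ LinearMap.range f → z ∈ LinearMap.range f)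
    (hsep_surj : ∀ y : M, ∃ z : M, y - τ z ∈ LinearMap.range f) :
    ∃ g : M →ₗ[Polynomial L] M',
      Function.Injective g ∧
      (∀ x : M, g (τ x) = τ' (g x)) ∧
      (∃ b : Polynomial L, b ≠ 0 ∧ ∀ y : M', b • y ∈ LinearMap.range g) ∧
      (∀ z : M', τ' z ∈ LinearMap.range g → z ∈ LinearMap.range g) ∧
      (∀ y : M', ∃ z : M', y - τ' z ∈ LinearMap.range g) := by
  classical
  set R := Polynomial L with hR
  -- package τ, τ' as additive homs to get zero/neg/sub lemmas
  have hτ0 : τ 0 = 0 := (AddMonoidHom.mk' τ hτadd).map_zero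
  have hτ'0 : τ' 0 = 0 := (AddMonoidHom.mk' τ' hτ'add).map_zero
  have hτneg : ∀ x, τ (-x) = - τ x := (AddMonoidHom.mk' τ hτadd).map_neg
  have hτsub : ∀ x y, τ (x - y) = τ x - τ y := (AddMonoidHom.mk' τ hτadd).map_sub
  have hτ'sub : ∀ x y, τ' (x - y) = τ' x - τ' y := (AddMonoidHom.mk' τ' hτ'add).map_sub
  -- the Frobenius has finite order
  obtain ⟨m, hm, hfrobm⟩ := aux_exists_pos_iterate_eq_self frob.injective
  -- iterated coefficientwise description of iterated map
  have hcoeffiter : ∀ (n : ℕ) (p : R) (i : ℕ),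
      ((fun p : R => p.map frob)^[n] p).coeff i = (⇑frob)^[n] (p.coeff i) := by
    intro n
    induction n with
    | zero => intro p i; simp
    | succ n ih =>
      intro p i
      rw [Function.iterate_succ_apply', Function.iterate_succ_apply', Polynomial.coeff_map, ih]
  have hmapm : ∀ p : R, (fun p : R => p.map frob)^[m] p = p := by
    intro p; ext i; rw [hcoeffiter, hfrobm]
  -- iterated additivity and semilinearity of τ
  have hiter_add : ∀ (n : ℕ) (x y : M), τ^[n] (x + y) = τ^[n] x + τ^[n] y := by
    intro n
    induction n with
    | zero => intro x y; simp
    | succ n ih => intro x y; rw [Function.iterate_succ_apply', Function.iterate_succ_apply',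
        Function.iterate_succ_apply', ih, hτadd]
  have hiter_sl : ∀ (n : ℕ) (p : R) (x : M),
      τ^[n] (p • x) = ((fun p : R => p.map frob)^[n] p) • (τ^[n] x) := by
    intro n
    induction n with
    | zero => intro p x; simp
    | succ n ih => intro p x; rw [Function.iterate_succ_apply', Function.iterate_succ_apply',
        Function.iterate_succ_apply', ih, hτsl]
  have hiter'_add : ∀ (n : ℕ) (x y : M'), τ'^[n] (x + y) = τ'^[n] x + τ'^[n] y := by
    intro n
    induction n with
    | zero => intro x y; simp
    | succ n ih => intro x y; rw [Function.iterate_succ_apply', Function.iterate_succ_apply',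
        Function.iterate_succ_apply', ih, hτ'add]
  have hiter'_sl : ∀ (n : ℕ) (p : R) (x : M'),
      τ'^[n] (p • x) = ((fun p : R => p.map frob)^[n] p) • (τ'^[n] x) := by
    intro n
    induction n with
    | zero => intro p x; simp
    | succ n ih => intro p x; rw [Function.iterate_succ_apply', Function.iterate_succ_apply',
        Function.iterate_succ_apply', ih, hτ'sl]
  -- the m-fold iterates as linear maps
  set πl : M →ₗ[R] M :=
    { toFun := τ^[m]
      map_add' := hiter_add m
      map_smul' := fun p x => by simp only [RingHom.id_apply]; rw [hiter_sl m, hmapm] } with hπl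
  set πl' : M' →ₗ[R] M' :=
    { toFun := τ'^[m]
      map_add' := hiter'_add m
      map_smul' := fun p x => by simp only [RingHom.id_apply]; rw [hiter'_sl m, hmapm] } with hπl'
  -- compatibility of iterates with f
  have hcompat_iter : ∀ (n : ℕ) (y : M'), τ^[n] (f y) = f (τ'^[n] y) := by
    intro n
    induction n with
    | zero => intro y; simp
    | succ n ih => intro y; rw [Function.iterate_succ_apply', Function.iterate_succ_apply',
        ih, hcompat]
  -- the sigma-invariant annihilator a
  obtain ⟨a₀, ha₀, ha₀r⟩ := htors
  set mp : R → R := fun p => p.map frob with hmp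
  have hmpinj : Function.Injective mp := fun p r h => Polynomial.map_injective frob frob.injective h
  set a : R := ∏ i ∈ Finset.range m, mp^[i] a₀ with ha
  have hmp0 : ∀ i : ℕ, mp^[i] (0 : R) = 0 := by
    intro i
    induction i with
    | zero => simp
    | succ n ih => rw [Function.iterate_succ_apply', ih]; simp [hmp]
  have hane : a ≠ 0 := by
    rw [ha, Finset.prod_ne_zero_iff]
    intro i _ h0
    exact ha₀ ((hmpinj.iterate i) (h0.trans (hmp0 i).symm))
  obtain ⟨m₁, hm₁⟩ : ∃ m₁, m = m₁ + 1 := ⟨m - 1, by omega⟩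
  have hamem : ∀ y : M, a • y ∈ LinearMap.range f := by
    intro y
    have hsplit : a = (∏ i ∈ Finset.range m₁, mp^[i + 1] a₀) * a₀ := by
      rw [ha, hm₁, Finset.prod_range_succ']
      rw [Function.iterate_zero_apply]
    rw [hsplit, mul_smul]
    obtain ⟨z, hz⟩ := ha₀r y
    exact ⟨(∏ i ∈ Finset.range m₁, mp^[i + 1] a₀) • z, by rw [map_smul, hz]⟩
  have hamap : a.map frob = a := by
    have h1 : a.map frob = ∏ i ∈ Finset.range m, mp^[i + 1] a₀ := by
      have : a.map frob = (Polynomial.mapRingHom frob) a := rfl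
      rw [this, ha, map_prod]
      refine Finset.prod_congr rfl fun i _ => ?_
      have : (Polynomial.mapRingHom frob) (mp^[i] a₀) = mp (mp^[i] a₀) := rfl
      rw [this, ← Function.iterate_succ_apply' mp]
    have h2 : ∏ i ∈ Finset.range m, mp^[i + 1] a₀
        = (∏ i ∈ Finset.range m₁, mp^[i + 1] a₀) * mp^[m₁ + 1] a₀ := by
      rw [hm₁, Finset.prod_range_succ]
    have h3 : a = (∏ i ∈ Finset.range m₁, mp^[i + 1] a₀) * mp^[0] a₀ := by
      rw [ha, hm₁, Finset.prod_range_succ']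
    have h4 : mp^[m₁ + 1] a₀ = mp^[0] a₀ := by
      rw [Function.iterate_zero_apply, ← hm₁]
      exact hmapm a₀
    rw [h1, h2, h4, ← h3]
  -- the quotient by the range of f is finite
  have hQfin : Finite (M ⧸ LinearMap.range f) := by
    refine aux_finite_of_torsion _ a₀ ha₀ ?_
    intro n
    obtain ⟨y, rfl⟩ := Submodule.Quotient.mk_surjective _ n
    rw [← Submodule.Quotient.mk_smul, Submodule.Quotient.mk_eq_zero]
    exact ha₀r y
  -- πl descends to the quotient
  have hrangele : LinearMap.range f ≤ (LinearMap.range f).comap πl := by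
    rintro x ⟨y, rfl⟩
    exact ⟨τ'^[m] y, (hcompat_iter m y).symm⟩
  set FQ := Submodule.mapQ (LinearMap.range f) (LinearMap.range f) πl hrangele with hFQ
  have hFQmk : ∀ x : M, FQ (Submodule.Quotient.mk x) = Submodule.Quotient.mk (τ^[m] x) :=
    fun x => Submodule.mapQ_apply _ _ _ x
  -- iterated separability of f
  have hsep_iter : ∀ (n : ℕ) (x : M), τ^[n] x ∈ LinearMap.range f → x ∈ LinearMap.range f := by
    intro n
    induction n with
    | zero => intro x h; simpa using h
    | succ n ih =>
      intro x h
      rw [Function.iterate_succ_apply'] at h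
      exact ih x (hsep_inj _ h)
  have hFQinj : Function.Injective FQ := by
    intro x y hxy
    obtain ⟨x, rfl⟩ := Submodule.Quotient.mk_surjective _ x
    obtain ⟨y, rfl⟩ := Submodule.Quotient.mk_surjective _ y
    rw [hFQmk, hFQmk, Submodule.Quotient.eq] at hxy
    rw [Submodule.Quotient.eq]
    have : τ^[m] (x - y) ∈ LinearMap.range f := by
      have : τ^[m] (x - y) = τ^[m] x - τ^[m] y := (AddMonoidHom.mk' _ (hiter_add m)).map_sub x y
      rw [this]; exact hxy
    exact hsep_iter m _ this
  obtain ⟨r, hrpos, hFQr⟩ := aux_exists_pos_iterate_eq_self hFQinj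
  have hFQiter : ∀ (j : ℕ) (x : M),
      FQ^[j] (Submodule.Quotient.mk x) = Submodule.Quotient.mk (τ^[m * j] x) := by
    intro j
    induction j with
    | zero => intro x; simp
    | succ j ih =>
      intro x
      rw [Function.iterate_succ_apply', ih, hFQmk, ← Function.iterate_add_apply]
      congr 2
      ring
  have key_r : ∀ x : M, τ^[m * r] x - x ∈ LinearMap.range f := by
    intro x
    have := hFQr (Submodule.Quotient.mk x)
    rw [hFQiter] at this
    exact (Submodule.Quotient.eq _).mp this
  -- M is torsion-free, hence free over the PID L[X]
  have hNZ : NoZeroSMulDivisors R M := by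
    obtain ⟨s, hsec⟩ := Module.projective_def.mp ‹Module.Projective R M›
    refine ⟨fun {c x} hcx => ?_⟩
    by_cases hc : c = 0
    · exact Or.inl hc
    · refine Or.inr ?_
      have h1 : c • s x = 0 := by rw [← map_smul, hcx, map_zero]
      have h2 : s x = 0 := by
        refine Finsupp.ext fun i => ?_
        have := congrArg (fun v => v i) h1
        simp only [Finsupp.smul_apply, Finsupp.coe_zero, Pi.zero_apply, smul_eq_mul] at this
        rcases mul_eq_zero.mp this with h | h
        · exact absurd h hc
        · exact h
      have := hsec.injective (a₁ := x) (a₂ := 0) (by rw [h2, map_zero])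
      exact this
  haveI := hNZ
  haveI : Module.Free R M := Module.free_of_finite_type_torsion_free'
  set ι := Module.Free.ChooseBasisIndex R M with hι
  set b : Module.Basis ι R M := Module.Free.chooseBasis R M with hb
  set n : ℕ := Fintype.card ι with hn
  -- matrices
  set A0 : Matrix ι ι R := LinearMap.toMatrix b b (πl ^ r - 1) with hA0
  set A1 : Matrix ι ι R := LinearMap.toMatrix b b (a • πl) with hA1
  -- a • πl is injective
  have hτm_inj : Function.Injective (τ^[m]) := hτinj.iterate m
  have haπinj : Function.Injective (a • πl) := by
    intro x y hxy
    simp only [LinearMap.smul_apply] at hxy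
    have : πl x = πl y := by
      have := sub_eq_zero.mpr hxy
      rw [← smul_sub] at this
      rcases smul_eq_zero.mp this with h | h
      · exact absurd h hane
      · exact sub_eq_zero.mp h
    exact hτm_inj this
  have hdetA1 : A1.det ≠ 0 := by
    intro h0
    obtain ⟨v, hv, hmv⟩ := Matrix.exists_mulVec_eq_zero_iff.mpr h0
    apply hv
    set x : M := b.equivFun.symm v with hx
    have hrepr : (⇑(b.repr x) : ι → R) = v := by
      rw [← b.equivFun_apply, hx, b.equivFun.apply_symm_apply]
    have h1 : A1.mulVec v = ⇑(b.repr ((a • πl) x)) := by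
      rw [← hrepr, hA1]
      exact LinearMap.toMatrix_mulVec_repr b b (a • πl) x
    have h2 : (⇑(b.repr ((a • πl) x)) : ι → R) = 0 := by rw [← h1, hmv]
    have h3 : (a • πl) x = 0 := by
      have h4 : b.repr ((a • πl) x) = 0 := by
        refine Finsupp.ext fun i => ?_
        exact congrFun h2 i
      simpa using congrArg b.repr.symm h4
    have hx0 : x = 0 := haπinj (by rw [h3, map_zero])
    rw [← hrepr, hx0]
    simp
  -- the polynomial P and the choice of the exponent k
  set P : Polynomial R := Matrix.det ((X : Polynomial R) • A1.map C + A0.map C) with hP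
  have hPcoeff : P.coeff n = A1.det := Polynomial.coeff_det_X_add_C_card A1 A0
  have hPne : P ≠ 0 := fun h0 => hdetA1 (by rw [← hPcoeff, h0, Polynomial.coeff_zero])
  have hroots : {x : R | P.IsRoot x}.Finite := Polynomial.finite_setOf_isRoot hPne
  have hXpow_inj : Function.Injective (fun k : ℕ => (X : R) ^ k) := by
    intro i j hij
    have := congrArg natDegree hij
    simpa [Polynomial.natDegree_X_pow] using this
  obtain ⟨k, hk⟩ : ∃ k : ℕ, ¬ P.IsRoot ((X : R) ^ k) := by
    by_contra hcon
    push_neg at hcon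
    have hsub : Set.range (fun k : ℕ => (X : R) ^ k) ⊆ {x : R | P.IsRoot x} := by
      rintro _ ⟨k, rfl⟩
      exact hcon k
    exact (Set.infinite_range_of_injective hXpow_inj) (hroots.subset hsub)
  set e : R := (X : R) ^ k with he
  have hemap : e.map frob = e := by rw [he, Polynomial.map_pow, Polynomial.map_X]
  have haemap : (a * e).map frob = a * e := by rw [Polynomial.map_mul, hamap, hemap]
  -- the endomorphism h
  set h : M →ₗ[R] M := πl ^ r - 1 + (a * e) • πl with hh
  have hmat : LinearMap.toMatrix b b h = A0 + e • A1 := by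
    rw [hh, map_add, hA0]
    congr 1
    have : (a * e) • πl = e • (a • πl) := by
      rw [smul_smul, mul_comm]
    rw [this, map_smul, hA1]
  have hdeth : (LinearMap.toMatrix b b h).det = P.eval e := by
    have hmapmat : ((X : Polynomial R) • A1.map C + A0.map C).map (Polynomial.evalRingHom e)
        = A0 + e • A1 := by
      ext i j : 1
      simp only [Matrix.map_apply, Matrix.add_apply, Matrix.smul_apply, Matrix.map_apply,
        smul_eq_mul, map_add, map_mul, Polynomial.eval_X, Polynomial.eval_C,
        Polynomial.coe_evalRingHom, Polynomial.eval_add, Polynomial.eval_mul]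
      ring
    rw [hmat, ← hmapmat]
    have hcomm := RingHom.map_det (Polynomial.evalRingHom e)
      ((X : Polynomial R) • A1.map C + A0.map C)
    rw [RingHom.mapMatrix_apply] at hcomm
    rw [← hcomm]
    simp [hP]
  set d : R := P.eval e with hd
  have hdne : d ≠ 0 := fun h0 => hk h0
  have hdeth' : (LinearMap.toMatrix b b h).det = d := hdeth
  -- h is injective
  have hhinj : Function.Injective h := by
    intro x y hxy
    have hsub0 : h (x - y) = 0 := by rw [map_sub, hxy, sub_self]
    by_contra hne
    have hxyne : x - y ≠ 0 := fun h0 => hne (sub_eq_zero.mp h0)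
    have hvne : (⇑(b.repr (x - y)) : ι → R) ≠ 0 := by
      intro h0
      apply hxyne
      have : b.repr (x - y) = 0 := by
        refine Finsupp.ext fun i => ?_
        exact congrFun h0 i
      simpa using congrArg b.repr.symm this
    have : (LinearMap.toMatrix b b h).det = 0 := by
      rw [← Matrix.exists_mulVec_eq_zero_iff]
      refine ⟨⇑(b.repr (x - y)), hvne, ?_⟩
      rw [LinearMap.toMatrix_mulVec_repr b b h (x - y), hsub0]
      simp
    rw [hdeth'] at this
    exact hdne this
  -- the adjugate gives d • y ∈ range h
  set ψ : M →ₗ[R] M := Matrix.toLin b b ((LinearMap.toMatrix b b h).adjugate) with hψ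
  have hadj : ∀ y : M, h (ψ y) = d • y := by
    intro y
    have h1 : h (ψ y) = Matrix.toLin b b (LinearMap.toMatrix b b h) (ψ y) := by
      rw [Matrix.toLin_toMatrix]
    rw [h1, hψ, ← Matrix.toLin_mul_apply, Matrix.mul_adjugate, hdeth']
    simp [Matrix.toLin_one]
  -- explicit formula for h
  have hπlcoe : ⇑πl = τ^[m] := rfl
  have hpow : ∀ x : M, (πl ^ r) x = τ^[m * r] x := by
    intro x
    rw [Module.End.pow_apply, Function.iterate_mul]
    rw [show ⇑πl = τ^[m] from rfl]
  have hval : ∀ x : M, h x = τ^[m * r] x - x + (a * e) • τ^[m] x := by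
    intro x
    rw [hh]
    simp only [LinearMap.add_apply, LinearMap.sub_apply, LinearMap.smul_apply,
      Module.End.one_apply]
    rw [hpow x]
    rfl
  have hhx : ∀ x : M, h x ∈ LinearMap.range f := by
    intro x
    rw [hval x, mul_smul]
    exact Submodule.add_mem _ (key_r x) (hamem _)
  -- h commutes with τ
  have hcommτ : ∀ x : M, h (τ x) = τ (h x) := by
    intro x
    have h1 : τ^[m * r] (τ x) = τ (τ^[m * r] x) := by
      rw [← Function.iterate_succ_apply, Function.iterate_succ_apply']
    have h2 : τ^[m] (τ x) = τ (τ^[m] x) := by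
      rw [← Function.iterate_succ_apply, Function.iterate_succ_apply']
    have h3 : τ ((a * e) • τ^[m] x) = (a * e) • τ (τ^[m] x) := by
      rw [hτsl, haemap]
    rw [hval (τ x), hval x, hτadd, hτsub, h1, h2, h3]
  -- definition of g
  set ef := LinearEquiv.ofInjective f hfinj with hef
  set g : M →ₗ[R] M' := ef.symm.toLinearMap ∘ₗ (h.codRestrict (LinearMap.range f) hhx) with hg
  have hfg : ∀ x : M, f (g x) = h x := by
    intro x
    have h1 : g x = ef.symm ⟨h x, hhx x⟩ := by
      rw [hg]
      rfl
    rw [h1]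
    have h2 := ef.apply_symm_apply ⟨h x, hhx x⟩
    have h3 := congrArg Subtype.val h2
    rwa [hef, LinearEquiv.ofInjective_apply] at h3
  -- conclusion 1 : g is injective
  have hginj : Function.Injective g := by
    intro x y hxy
    exact hhinj (by rw [← hfg, ← hfg, hxy])
  -- conclusion 2 : g is compatible with τ, τ'
  have hgτ : ∀ x : M, g (τ x) = τ' (g x) := by
    intro x
    apply hfinj
    rw [hfg, hcompat, hfg, hcommτ]
  -- conclusion 3 : the cokernel of g is torsion, killed by d
  have hd3 : ∀ y : M', d • y ∈ LinearMap.range g := by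
    intro y
    refine ⟨ψ (f y), ?_⟩
    apply hfinj
    rw [hfg, hadj, map_smul]
  -- conclusion 5 : surjectivity of the induced τ' on the cokernel of g
  obtain ⟨s₁, hs₁⟩ : ∃ s₁, m * r = s₁ + 1 :=
    ⟨m * r - 1, (Nat.succ_pred_eq_of_pos (Nat.mul_pos hm hrpos)).symm⟩
  have hsurj5 : ∀ y : M', ∃ z : M', y - τ' z ∈ LinearMap.range g := by
    intro y
    refine ⟨τ'^[s₁] y + (a * e) • τ'^[m₁] y, ⟨-(f y), ?_⟩⟩
    apply hfinj
    have hfz : f (τ'^[s₁] y + (a * e) • τ'^[m₁] y)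
        = τ^[s₁] (f y) + (a * e) • τ^[m₁] (f y) := by
      rw [map_add, map_smul, ← hcompat_iter, ← hcompat_iter]
    have hτfz : τ (f (τ'^[s₁] y + (a * e) • τ'^[m₁] y))
        = τ^[m * r] (f y) + (a * e) • τ^[m] (f y) := by
      rw [hfz, hτadd, hτsl, haemap]
      rw [← Function.iterate_succ_apply' τ s₁, ← Function.iterate_succ_apply' τ m₁,
        hs₁, hm₁]
    rw [hfg, map_neg, map_sub, hcompat, hτfz, hval (f y)]
    abel
  -- the cokernel of g is finite
  have hQ'fin : Finite (M' ⧸ LinearMap.range g) := by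
    refine aux_finite_of_torsion _ d hdne ?_
    intro nq
    obtain ⟨y, rfl⟩ := Submodule.Quotient.mk_surjective _ nq
    rw [← Submodule.Quotient.mk_smul, Submodule.Quotient.mk_eq_zero]
    exact hd3 y
  -- the induced map on the cokernel of g
  set T : (M' ⧸ LinearMap.range g) → (M' ⧸ LinearMap.range g) := fun qq =>
    Quotient.liftOn' qq (fun z => Submodule.Quotient.mk (τ' z)) (by
      intro z₁ z₂ hz
      have hz' : z₁ - z₂ ∈ LinearMap.range g :=
        (Submodule.quotientRel_def _).mp hz
      obtain ⟨x, hx⟩ := hz'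
      have hmem : τ' z₁ - τ' z₂ ∈ LinearMap.range g := by
        refine ⟨τ x, ?_⟩
        rw [hgτ, hx, hτ'sub]
      exact (Submodule.Quotient.eq _).mpr hmem) with hT
  have hTmk : ∀ z : M', T (Submodule.Quotient.mk z) = Submodule.Quotient.mk (τ' z) :=
    fun z => rfl
  have hTsurj : Function.Surjective T := by
    intro qq
    obtain ⟨y, rfl⟩ := Submodule.Quotient.mk_surjective _ qq
    obtain ⟨z, hzz⟩ := hsurj5 y
    refine ⟨Submodule.Quotient.mk z, ?_⟩
    rw [hTmk]
    exact (Submodule.Quotient.eq _).mpr (by simpa using Submodule.neg_mem _ hzz)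
  have hTinj : Function.Injective T := (Finite.injective_iff_surjective).mpr hTsurj
  -- conclusion 4
  have hconc4 : ∀ z : M', τ' z ∈ LinearMap.range g → z ∈ LinearMap.range g := by
    intro z hzmem
    have h1 : T (Submodule.Quotient.mk z) = T (Submodule.Quotient.mk 0) := by
      rw [hTmk, hTmk, hτ'0]
      refine (Submodule.Quotient.eq _).mpr ?_
      simpa using hzmem
    have h2 := hTinj h1
    have h3 : z - 0 ∈ LinearMap.range g := (Submodule.Quotient.eq _).mp h2
    simpa using h3
  exact ⟨g, hginj, hgτ, ⟨d, hdne, hd3⟩, hconc4, hsurj5⟩
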